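/- Fix 2 < n < ω. Let M be the generic n-partite tournament: a countably infinite n-partite tournament which is ultrahomogeneous (every isomorphism between finite induced substructures of M extends to an automorphism of M) and into which every finite n-partite tournament embeds. Then M does not have a local SWIR: there is no ternary relation on the nonempty finite subsets of M satisfying (Inv), (Ex), (Sta) and (Mon). -/

import Mathlib

namespace Stmt18

open scoped Classical

variable {M : Type*}

/-- The permutation `g` fixes the finite set `A` pointwise. -/
def Fixes (g : Equiv.Perm M) (A : Finset M) : Prop := ∀ a ∈ A, g a = a

/-- The image `g(A)` of a finite set under a permutation. -/
def pimg (g : Equiv.Perm M) (A : Finset M) : Finset M := A.map g.toEmbedding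

/-- `B ≡_A B'` : some automorphism (with respect to the predicate `Auto`) fixes `A`
pointwise and maps `B` onto `B'`. -/
def EquivOver (Auto : Equiv.Perm M → Prop) (A B B' : Finset M) : Prop :=
  ∃ g : Equiv.Perm M, Auto g ∧ Fixes g A ∧ pimg g B = B'

/-- A local SWIR: a ternary relation `Ind` on the nonempty finite subsets of `M`
(`Ind A B C` is read `B ⫫_A C`) satisfying (Inv), (Ex), (Sta) and (Mon) with respect to
the automorphisms of `M` (the permutations satisfying `Auto`). -/
structure IsLocalSWIR (Auto : Equiv.Perm M → Prop)
    (Ind : Finset M → Finset M → Finset M → Prop) : Prop where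
  inv : ∀ A B C : Finset M, A.Nonempty → B.Nonempty → C.Nonempty →
    ∀ g : Equiv.Perm M, Auto g → Ind A B C → Ind (pimg g A) (pimg g B) (pimg g C)
  exLeft : ∀ A B C : Finset M, A.Nonempty → B.Nonempty → C.Nonempty →
    ∃ B' : Finset M, EquivOver Auto A B B' ∧ Ind A B' C
  exRight : ∀ A B C : Finset M, A.Nonempty → B.Nonempty → C.Nonempty →
    ∃ C' : Finset M, EquivOver Auto A C C' ∧ Ind A B C'
  staLeft : ∀ A B B' C : Finset M, A.Nonempty → B.Nonempty → B'.Nonempty → C.Nonempty →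
    Ind A B C → Ind A B' C →
    ∀ g : Equiv.Perm M, Auto g → Fixes g A → pimg g B = B' →
      ∃ h : Equiv.Perm M, Auto h ∧ Fixes h (A ∪ C) ∧ ∀ b ∈ B, h b = g b
  staRight : ∀ A B C C' : Finset M, A.Nonempty → B.Nonempty → C.Nonempty → C'.Nonempty →
    Ind A B C → Ind A B C' →
    ∀ g : Equiv.Perm M, Auto g → Fixes g A → pimg g C = C' →
      ∃ h : Equiv.Perm M, Auto h ∧ Fixes h (A ∪ B) ∧ ∀ c ∈ C, h c = g c
  monLeft : ∀ A B C D : Finset M, A.Nonempty → B.Nonempty → C.Nonempty → D.Nonempty →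
    Ind A (B ∪ D) C → Ind A B C ∧ Ind (A ∪ B) D C
  monRight : ∀ A B C D : Finset M, A.Nonempty → B.Nonempty → C.Nonempty → D.Nonempty →
    Ind A B (C ∪ D) → Ind A B C ∧ Ind (A ∪ C) B D

/-- `x ⊥ y`: `x` and `y` are distinct and non-adjacent. -/
def Perp {V : Type*} (r : V → V → Prop) (x y : V) : Prop := x ≠ y ∧ ¬ r x y ∧ ¬ r y x

/-- `x` and `y` lie in a common part. -/
def SamePart {V : Type*} (r : V → V → Prop) (x y : V) : Prop := x = y ∨ Perp r x y

/-- An `n`-partite tournament: an oriented graph in which `SamePart` is an equivalence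
relation with at most `n` classes. -/
structure IsNPartiteTournament {V : Type*} (n : ℕ) (r : V → V → Prop) : Prop where
  irrefl : ∀ x, ¬ r x x
  asymm : ∀ x y, r x y → ¬ r y x
  equiv : Equivalence (SamePart r)
  parts_le : ∀ v : Fin (n + 1) → V, ∃ i j, i ≠ j ∧ SamePart r (v i) (v j)


lemma samePart_map (r : M → M → Prop) (g : Equiv.Perm M)
    (hg : ∀ a b : M, r (g a) (g b) ↔ r a b) {a b : M}
    (h : SamePart r a b) : SamePart r (g a) (g b) := by
  rcases h with rfl | ⟨hne, h1, h2⟩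
  · exact Or.inl rfl
  · exact Or.inr ⟨fun he => hne (g.injective he),
      fun hr => h1 ((hg a b).mp hr), fun hr => h2 ((hg b a).mp hr)⟩

lemma exists_fix_map (r : M → M → Prop)
    (hirr : ∀ x, ¬ r x x) (hasym : ∀ x y, r x y → ¬ r y x)
    (ultra : ∀ (A B : Finset M) (h : (↑A : Set M) → (↑B : Set M)), Function.Bijective h →
      (∀ x y : (↑A : Set M), r (x : M) (y : M) ↔ r (h x : M) (h y : M)) →
      ∃ g : Equiv.Perm M, (∀ a b : M, r (g a) (g b) ↔ r a b) ∧
        ∀ x : (↑A : Set M), g (x : M) = (h x : M))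
    {w u v : M} (hu : r w u) (hv : r w v) :
    ∃ g : Equiv.Perm M, (∀ a b : M, r (g a) (g b) ↔ r a b) ∧ g w = w ∧ g u = v := by
  have hwu : w ≠ u := fun h => hirr w (h ▸ hu)
  have hwv : w ≠ v := fun h => hirr w (h ▸ hv)
  set A : Finset M := {w, u} with hA
  set B : Finset M := {w, v} with hB
  have hwA : w ∈ (↑A : Set M) := by simp [hA]
  have huA : u ∈ (↑A : Set M) := by simp [hA]
  have hwB : w ∈ (↑B : Set M) := by simp [hB]
  have hvB : v ∈ (↑B : Set M) := by simp [hB]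
  set h : (↑A : Set M) → (↑B : Set M) :=
    fun x => if (x : M) = w then ⟨w, hwB⟩ else ⟨v, hvB⟩ with hh
  have hmemA : ∀ x : (↑A : Set M), (x : M) = w ∨ (x : M) = u := by
    rintro ⟨x, hx⟩
    simpa [hA] using hx
  have happ_w : ∀ (x : (↑A : Set M)), (x : M) = w → ((h x : M)) = w := by
    intro x hx; simp [hh, hx]
  have happ_u : ∀ (x : (↑A : Set M)), (x : M) = u → ((h x : M)) = v := by
    intro x hx
    simp only [hh, hx]
    rw [if_neg (Ne.symm hwu)]
  have hbij : Function.Bijective h := by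
    constructor
    · intro x y hxy
      apply Subtype.ext
      have hxy' := congrArg Subtype.val hxy
      rcases hmemA x with hx | hx <;> rcases hmemA y with hy | hy
      · rw [hx, hy]
      · rw [happ_w x hx, happ_u y hy] at hxy'; exact absurd hxy' hwv
      · rw [happ_u x hx, happ_w y hy] at hxy'; exact absurd hxy'.symm hwv
      · rw [hx, hy]
    · rintro ⟨y, hy⟩
      have : y = w ∨ y = v := by simpa [hB] using hy
      rcases this with h' | h'
      · exact ⟨⟨w, hwA⟩, Subtype.ext (by rw [happ_w ⟨w, hwA⟩ rfl]; exact h'.symm)⟩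
      · exact ⟨⟨u, huA⟩, Subtype.ext (by rw [happ_u ⟨u, huA⟩ rfl]; exact h'.symm)⟩
  have hrel : ∀ x y : (↑A : Set M), r (x : M) (y : M) ↔ r (h x : M) (h y : M) := by
    intro x y
    rcases hmemA x with hx | hx <;> rcases hmemA y with hy | hy
    · rw [hx, hy, happ_w x hx, happ_w y hy]
    · rw [hx, hy, happ_w x hx, happ_u y hy]
      exact iff_of_true hu hv
    · rw [hx, hy, happ_u x hx, happ_w y hy]
      exact iff_of_false (hasym _ _ hu) (hasym _ _ hv)
    · rw [hx, hy, happ_u x hx, happ_u y hy]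
      exact iff_of_false (hirr u) (hirr v)
  obtain ⟨g, hg, hgval⟩ := ultra A B h hbij hrel
  refine ⟨g, hg, ?_, ?_⟩
  · rw [show g w = (h ⟨w, hwA⟩ : M) from hgval ⟨w, hwA⟩]
    exact happ_w ⟨w, hwA⟩ rfl
  · rw [show g u = (h ⟨u, huA⟩ : M) from hgval ⟨u, huA⟩]
    exact happ_u ⟨u, huA⟩ rfl

/-- for `2 < n < ω`, the generic `n`-partite tournament (a countably infinite,
ultrahomogeneous `n`-partite tournament into which every finite `n`-partite tournament
embeds) does not have a local SWIR. -/
theorem generic_nPartite_no_localSWIR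
    {n : ℕ} (hn : 2 < n) [Countable M] [Infinite M]
    (r : M → M → Prop) (hM : IsNPartiteTournament n r)
    (ultra : ∀ (A B : Finset M) (h : (↑A : Set M) → (↑B : Set M)), Function.Bijective h →
      (∀ x y : (↑A : Set M), r (x : M) (y : M) ↔ r (h x : M) (h y : M)) →
      ∃ g : Equiv.Perm M, (∀ a b : M, r (g a) (g b) ↔ r a b) ∧
        ∀ x : (↑A : Set M), g (x : M) = (h x : M))
    (univ : ∀ (k : ℕ) (r' : Fin k → Fin k → Prop), IsNPartiteTournament n r' →
      ∃ f : Fin k → M, Function.Injective f ∧ ∀ x y, r' x y ↔ r (f x) (f y)) :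
    ¬ ∃ Ind : Finset M → Finset M → Finset M → Prop,
        IsLocalSWIR (fun g : Equiv.Perm M => ∀ a b : M, r (g a) (g b) ↔ r a b) Ind := by
  rintro ⟨Ind, H⟩
  -- Step 1: embed a transitive tournament on `Fin n` into `M`.
  have hT : IsNPartiteTournament n (fun i j : Fin n => (i : ℕ) < (j : ℕ)) := by
    refine ⟨fun x => lt_irrefl _, fun x y h h' => absurd (lt_trans h h') (lt_irrefl _), ?_, ?_⟩
    · have key : ∀ x y : Fin n, SamePart (fun i j : Fin n => (i : ℕ) < (j : ℕ)) x y → x = y := by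
        rintro x y (rfl | ⟨hne, h1, h2⟩)
        · rfl
        · exact absurd (Fin.ext (by omega)) hne
      exact ⟨fun x => Or.inl rfl, fun h => Or.inl (key _ _ h).symm,
        fun h h' => Or.inl ((key _ _ h).trans (key _ _ h'))⟩
    · intro v
      obtain ⟨i, j, hij, heq⟩ := Fintype.exists_ne_map_eq_of_card_lt v (by simp)
      exact ⟨i, j, hij, Or.inl heq⟩
  obtain ⟨f, hfinj, hfr⟩ := univ n _ hT
  have hrel : ∀ i j : Fin n, (i : ℕ) < (j : ℕ) → r (f i) (f j) := fun i j h => (hfr i j).mp h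
  set i0 : Fin n := ⟨0, by omega⟩ with hi0
  set i1 : Fin n := ⟨1, by omega⟩ with hi1
  set i2 : Fin n := ⟨2, by omega⟩ with hi2
  have h10 : i1 ≠ i0 := by simp [hi0, hi1, Fin.ext_iff]
  have h20 : i2 ≠ i0 := by simp [hi0, hi2, Fin.ext_iff]
  have h21 : i2 ≠ i1 := by simp [hi1, hi2, Fin.ext_iff]
  set w : M := f i0 with hw
  set bigC : Finset M := (Finset.univ.erase i0).image f with hbigC
  have hmemC : ∀ i : Fin n, i ≠ i0 → f i ∈ bigC := fun i hi =>
    Finset.mem_image.mpr ⟨i, Finset.mem_erase.mpr ⟨hi, Finset.mem_univ i⟩, rfl⟩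
  have hCne : bigC.Nonempty := ⟨f i1, hmemC i1 h10⟩
  -- Step 2: an element x' of the same type as f i1 over w, independent from bigC over w.
  obtain ⟨B', ⟨g, hg, hgfix, hgB⟩, hIndB'⟩ := H.exLeft {w} {f i1} bigC
    (Finset.singleton_nonempty w) (Finset.singleton_nonempty _) hCne
  have hgw : g w = w := hgfix w (Finset.mem_singleton_self w)
  set x' : M := g (f i1) with hx'
  have hB' : B' = {x'} := by rw [← hgB]; simp [pimg]; rfl
  rw [hB'] at hIndB'
  have hrwx' : r w x' := by
    have h1 : r w (f i1) := hrel i0 i1 (by simp [hi0, hi1])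
    have h2 := (hg w (f i1)).mpr h1
    rwa [hgw] at h2
  -- Step 3: independence from each singleton, by monotonicity.
  have hsplit : ∀ i : Fin n, i ≠ i0 → Ind {w} {x'} {f i} := by
    intro i hi
    have hmem := hmemC i hi
    have hCeq : {f i} ∪ bigC.erase (f i) = bigC := by
      rw [← Finset.insert_eq]; exact Finset.insert_erase hmem
    have hDne : (bigC.erase (f i)).Nonempty := by
      by_cases h : i = i1
      · refine ⟨f i2, Finset.mem_erase.mpr ⟨fun he => ?_, hmemC i2 h20⟩⟩
        rw [h] at he
        exact h21 (hfinj he)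
      · exact ⟨f i1, Finset.mem_erase.mpr ⟨fun he => h (hfinj he).symm, hmemC i1 h10⟩⟩
    have hm := H.monRight {w} {x'} {f i} (bigC.erase (f i)) (Finset.singleton_nonempty _)
      (Finset.singleton_nonempty _) (Finset.singleton_nonempty _) hDne (by rw [hCeq]; exact hIndB')
    exact hm.1
  -- Step 4: x' is not in the same part as any f i, i ≠ 0, by stationarity.
  have hNS : ∀ i : Fin n, i ≠ i0 → ¬ SamePart r x' (f i) := by
    intro i hi hsp
    obtain ⟨j, hj0, hji⟩ : ∃ j : Fin n, j ≠ i0 ∧ j ≠ i := by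
      by_cases h : i = i1
      · exact ⟨i2, h20, fun he => h21 (by rw [he, h])⟩
      · exact ⟨i1, h10, fun he => h he.symm⟩
    have hivpos : 0 < (i : ℕ) := Nat.pos_of_ne_zero (fun h => hi (Fin.ext (by simp [hi0, h])))
    have hjvpos : 0 < (j : ℕ) := Nat.pos_of_ne_zero (fun h => hj0 (Fin.ext (by simp [hi0, h])))
    obtain ⟨g2, hg2, hg2w, hg2i⟩ := exists_fix_map r hM.irrefl hM.asymm ultra
      (hrel i0 i (by simp [hi0]; omega)) (hrel i0 j (by simp [hi0]; omega))
    obtain ⟨h2, hh2, hh2fix, hh2val⟩ := H.staRight {w} {x'} {f i} {f j}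
      (Finset.singleton_nonempty _) (Finset.singleton_nonempty _)
      (Finset.singleton_nonempty _) (Finset.singleton_nonempty _)
      (hsplit i hi) (hsplit j hj0) g2 hg2
      (fun a ha => by rw [Finset.mem_singleton.mp ha]; exact hg2w)
      (by simp [pimg, hg2i])
    have hx'fix : h2 x' = x' := hh2fix x' (Finset.mem_union_right _ (Finset.mem_singleton_self x'))
    have hfi2 : h2 (f i) = f j := by
      rw [hh2val (f i) (Finset.mem_singleton_self _)]; exact hg2i
    have hsp2 : SamePart r x' (f j) := by
      have hmapped := samePart_map r h2 hh2 hsp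
      rwa [hx'fix, hfi2] at hmapped
    have hspij : SamePart r (f i) (f j) := hM.equiv.trans (hM.equiv.symm hsp) hsp2
    have hadj : r (f i) (f j) ∨ r (f j) (f i) := by
      rcases lt_or_gt_of_ne (show (i : ℕ) ≠ (j : ℕ) from fun h => hji (Fin.ext h).symm) with h | h
      · exact Or.inl (hrel i j h)
      · exact Or.inr (hrel j i h)
    rcases hspij with heq | ⟨hne, ha1, ha2⟩
    · exact hji (hfinj heq).symm
    · rcases hadj with hr | hr
      · exact ha1 hr
      · exact ha2 hr
  -- Step 5: the n+1 points x', f 0, ..., f (n-1) are pairwise in distinct parts: contradiction.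
  have hnsw : ¬ SamePart r x' w := by
    rintro (heq | ⟨hne, ha1, ha2⟩)
    · exact hM.irrefl w (heq ▸ hrwx')
    · exact ha2 hrwx'
  obtain ⟨i, j, hij, hsp⟩ := hM.parts_le (fun k : Fin (n + 1) =>
    Fin.cases (motive := fun _ => M) x' f k)
  rcases Fin.eq_zero_or_eq_succ i with rfl | ⟨a, rfl⟩ <;>
    rcases Fin.eq_zero_or_eq_succ j with rfl | ⟨b, rfl⟩
  · exact hij rfl
  · rw [Fin.cases_zero, Fin.cases_succ] at hsp
    by_cases hb : b = i0
    · rw [hb, ← hw] at hsp; exact hnsw hsp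
    · exact hNS b hb hsp
  · rw [Fin.cases_zero, Fin.cases_succ] at hsp
    have hsp' := hM.equiv.symm hsp
    by_cases hb : a = i0
    · rw [hb, ← hw] at hsp'; exact hnsw hsp'
    · exact hNS a hb hsp'
  · rw [Fin.cases_succ, Fin.cases_succ] at hsp
    have hab : a ≠ b := fun h => hij (by rw [h])
    rcases hsp with heq | ⟨hne, ha1, ha2⟩
    · exact hab (hfinj heq)
    · rcases lt_or_gt_of_ne (show (a : ℕ) ≠ (b : ℕ) from fun h => hab (Fin.ext h)) with h | h
      · exact ha1 (hrel a b h)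
      · exact ha2 (hrel b a h)


end Stmt18
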